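/- Let σ > 0 and r > 0, and let f be holomorphic on the open strip S_σ = { z ∈ ℂ : |Im z| < σ } with M := sup_{|y| < σ} ∫_ℝ |f(x + i y)| dx < ∞. Let (w_k)_{k ∈ ℕ} be points of S_σ such that the closed disks of radius r centered at the w_k are pairwise disjoint and contained in S_σ. Then ∑_{k} |f(w_k)| ≤ 2σM/(π r²). -/

import Mathlib

open MeasureTheory

open Set Metric Real
open scoped ENNReal NNReal

lemma measurable_indicator_of_continuousOn {S : Set ℂ} (hS : IsOpen S) {g : ℂ → ℝ≥0∞}
    (hg : ContinuousOn g S) : Measurable (S.indicator g) := by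
  apply measurable_of_isOpen
  intro U hU
  rw [Set.indicator_preimage]
  have h1 : MeasurableSet (g ⁻¹' U ∩ S) := by
    have := hg.isOpen_inter_preimage hS hU
    exact this.measurableSet.congr (by rw [Set.inter_comm])
  have h2 : MeasurableSet ((fun _ : ℂ => (0 : ℝ≥0∞)) ⁻¹' U \ S) := by
    by_cases h : (0 : ℝ≥0∞) ∈ U
    · have : (fun _ : ℂ => (0 : ℝ≥0∞)) ⁻¹' U = Set.univ := by
        ext z; simp [h]
      rw [this]; exact MeasurableSet.univ.diff hS.measurableSet
    · have : (fun _ : ℂ => (0 : ℝ≥0∞)) ⁻¹' U = ∅ := by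
        ext z; simp [h]
      rw [this]; simp
  exact (h1.union h2).congr (by rw [Set.ite, Set.inter_comm]; rfl)

theorem lintegral_comp_polarCoord_symm' (g : ℝ × ℝ → ℝ≥0∞) :
    (∫⁻ p in polarCoord.target, ENNReal.ofReal p.1 * g (polarCoord.symm p)) = ∫⁻ p, g p := by
  set B : ℝ × ℝ → ℝ × ℝ →L[ℝ] ℝ × ℝ := fun p =>
    LinearMap.toContinuousLinearMap (Matrix.toLin (Module.Basis.finTwoProd ℝ) (Module.Basis.finTwoProd ℝ)
      !![Real.cos p.2, -p.1 * Real.sin p.2; Real.sin p.2, p.1 * Real.cos p.2])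
  have A : ∀ p ∈ polarCoord.symm.source, HasFDerivAt polarCoord.symm (B p) p := fun p _ =>
    hasFDerivAt_polarCoord_symm p
  have B_det : ∀ p, (B p).det = p.1 := by
    intro p
    conv_rhs => rw [← one_mul p.1, ← cos_sq_add_sin_sq p.2]
    simp only [B, neg_mul, LinearMap.det_toContinuousLinearMap, LinearMap.det_toLin,
      Matrix.det_fin_two_of, sub_neg_eq_add]
    ring
  symm
  calc
    ∫⁻ p, g p = ∫⁻ p in polarCoord.source, g p := by
      rw [← setLIntegral_univ]
      exact setLIntegral_congr polarCoord_source_ae_eq_univ.symm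
    _ = ∫⁻ p in polarCoord.symm '' polarCoord.target, g p := by
      rw [polarCoord.symm_image_target_eq_source]
    _ = ∫⁻ p in polarCoord.target, ENNReal.ofReal |(B p).det| * g (polarCoord.symm p) :=
      lintegral_image_eq_lintegral_abs_det_fderiv_mul volume
        polarCoord.open_target.measurableSet
        (fun p hp => (A p hp).hasFDerivWithinAt) polarCoord.symm.injOn g
    _ = ∫⁻ p in polarCoord.target, ENNReal.ofReal p.1 * g (polarCoord.symm p) := by
      refine setLIntegral_congr_fun polarCoord.open_target.measurableSet
        (fun p hp => ?_)
      rw [B_det, abs_of_pos hp.1]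

theorem Complex.lintegral_comp_polarCoord_symm' (g : ℂ → ℝ≥0∞) :
    (∫⁻ p in polarCoord.target, ENNReal.ofReal p.1 * g (Complex.polarCoord.symm p)) =
      ∫⁻ z, g z := by
  rw [← (Complex.volume_preserving_equiv_real_prod.symm).lintegral_comp_emb
    Complex.measurableEquivRealProd.symm.measurableEmbedding g,
    ← _root_.lintegral_comp_polarCoord_symm' fun p => g (Complex.measurableEquivRealProd.symm p)]
  rfl

lemma circleMap_eq_polar (c : ℂ) (ρ θ : ℝ) :
    circleMap c ρ θ = c + Complex.polarCoord.symm (ρ, θ) := by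
  simp only [circleMap, Complex.polarCoord_symm_apply, Complex.exp_mul_I]
  push_cast
  ring

lemma circle_bound {S : Set ℂ} {f : ℂ → ℂ} (hf : DifferentiableOn ℂ f S)
    {c : ℂ} {ρ : ℝ} (hρ : 0 < ρ) (hball : Metric.closedBall c ρ ⊆ S) :
    2 * π * ‖f c‖ ≤ ∫ θ in (-π)..π, ‖f (c + Complex.polarCoord.symm (ρ, θ))‖ := by
  have hd : DiffContOnCl ℂ f (Metric.ball c ρ) := by
    refine DifferentiableOn.diffContOnCl (hf.mono ?_)
    exact subset_trans closure_ball_subset_closedBall hball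
  have hmean := (hd.circleIntegral_sub_inv_smul (Metric.mem_ball_self hρ)).symm
  have hcirc : (∮ z in C(c, ρ), (z - c)⁻¹ • f z)
      = Complex.I • ∫ θ in (0:ℝ)..(2*π), f (circleMap c ρ θ) := by
    rw [circleIntegral, ← intervalIntegral.integral_smul]
    congr 1
    funext θ
    have hne : circleMap 0 ρ θ ≠ 0 := circleMap_ne_center hρ.ne'
    simp only [deriv_circleMap, circleMap_sub_center, smul_eq_mul]
    field_simp
  have h1 : 2 * π * ‖f c‖ = ‖∫ θ in (0:ℝ)..(2*π), f (circleMap c ρ θ)‖ := by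
    have := hmean.trans hcirc
    have hn := congrArg norm this
    rw [norm_smul, norm_smul] at hn
    simpa [Complex.norm_I, abs_of_pos Real.pi_pos,
      abs_of_pos Real.two_pi_pos] using hn
  have h2 : ‖∫ θ in (0:ℝ)..(2*π), f (circleMap c ρ θ)‖
      ≤ ∫ θ in (0:ℝ)..(2*π), ‖f (circleMap c ρ θ)‖ :=
    intervalIntegral.norm_integral_le_integral_norm Real.two_pi_pos.le
  have hper : Function.Periodic (fun θ => ‖f (circleMap c ρ θ)‖) (2*π) := fun θ => by
    simp [periodic_circleMap c ρ θ]
  have h3 : (∫ θ in (0:ℝ)..(2*π), ‖f (circleMap c ρ θ)‖)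
      = ∫ θ in (-π)..π, ‖f (circleMap c ρ θ)‖ := by
    have := hper.intervalIntegral_add_eq 0 (-π)
    rw [zero_add] at this
    rw [this]
    congr 1
    ring
  calc 2 * π * ‖f c‖ = ‖∫ θ in (0:ℝ)..(2*π), f (circleMap c ρ θ)‖ := h1
    _ ≤ ∫ θ in (0:ℝ)..(2*π), ‖f (circleMap c ρ θ)‖ := h2
    _ = ∫ θ in (-π)..π, ‖f (circleMap c ρ θ)‖ := h3
    _ = ∫ θ in (-π)..π, ‖f (c + Complex.polarCoord.symm (ρ, θ))‖ := by
        simp_rw [circleMap_eq_polar]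

lemma mean_value {S : Set ℂ} (hS : IsOpen S) {f : ℂ → ℂ} (hf : DifferentiableOn ℂ f S)
    {c : ℂ} {r : ℝ} (hr : 0 < r) (hsub : Metric.closedBall c r ⊆ S) :
    ENNReal.ofReal (π * r ^ 2) * ‖f c‖₊ ≤
      ∫⁻ z in Metric.closedBall c r, S.indicator (fun z => (‖f z‖₊ : ℝ≥0∞)) z := by
  set G : ℂ → ℝ≥0∞ := S.indicator (fun z => (‖f z‖₊ : ℝ≥0∞)) with hGdef
  have hGmeas : Measurable G := by
    refine measurable_indicator_of_continuousOn hS ?_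
    exact ENNReal.continuous_coe.comp_continuousOn (continuous_nnnorm.comp_continuousOn
      hf.continuousOn)
  have hsymm_cont : Continuous fun p : ℝ × ℝ => Complex.polarCoord.symm p := by
    simp only [Complex.polarCoord_symm_apply]
    fun_prop
  have hFmeas : Measurable fun p : ℝ × ℝ =>
      ENNReal.ofReal p.1 * G (c + Complex.polarCoord.symm p) := by
    exact (measurable_fst.ennreal_ofReal).mul
      (hGmeas.comp ((continuous_const.add hsymm_cont).measurable))
  have key : ∀ ρ ∈ Ioc (0:ℝ) r, ENNReal.ofReal (2 * π * ‖f c‖) ≤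
      ∫⁻ θ in Ioo (-π) π, G (c + Complex.polarCoord.symm (ρ, θ)) := by
    intro ρ hρ
    have hρ0 := hρ.1
    have hballρ : Metric.closedBall c ρ ⊆ S := (closedBall_subset_closedBall hρ.2).trans hsub
    have hmem : ∀ θ : ℝ, c + Complex.polarCoord.symm (ρ, θ) ∈ S := fun θ => by
      apply hballρ
      simp only [Metric.mem_closedBall, dist_eq_norm, add_sub_cancel_left,
        Complex.norm_polarCoord_symm]
      rw [abs_of_pos hρ0]
    have hcont : Continuous fun θ : ℝ => ‖f (c + Complex.polarCoord.symm (ρ, θ))‖ := by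
      have h0 : Continuous fun θ : ℝ => f (circleMap c ρ θ) :=
        hf.continuousOn.comp_continuous (continuous_circleMap c ρ)
          (fun θ => hballρ (circleMap_mem_closedBall c hρ0.le θ))
      simp_rw [circleMap_eq_polar] at h0
      exact h0.norm
    have hintOn : IntegrableOn (fun θ : ℝ => ‖f (c + Complex.polarCoord.symm (ρ, θ))‖)
        (Ioc (-π) π) := hcont.integrableOn_Ioc
    calc ENNReal.ofReal (2 * π * ‖f c‖)
        ≤ ENNReal.ofReal (∫ θ in (-π)..π, ‖f (c + Complex.polarCoord.symm (ρ, θ))‖) :=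
          ENNReal.ofReal_le_ofReal (circle_bound hf hρ0 hballρ)
      _ = ENNReal.ofReal (∫ θ in Ioc (-π) π, ‖f (c + Complex.polarCoord.symm (ρ, θ))‖) := by
          rw [intervalIntegral.integral_of_le (by linarith [Real.pi_pos])]
      _ = ∫⁻ θ in Ioc (-π) π, ENNReal.ofReal ‖f (c + Complex.polarCoord.symm (ρ, θ))‖ :=
          ofReal_integral_eq_lintegral_ofReal hintOn
            (Filter.Eventually.of_forall fun θ => norm_nonneg _)
      _ = ∫⁻ θ in Ioo (-π) π, ENNReal.ofReal ‖f (c + Complex.polarCoord.symm (ρ, θ))‖ :=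
          (setLIntegral_congr Ioo_ae_eq_Ioc).symm
      _ = ∫⁻ θ in Ioo (-π) π, G (c + Complex.polarCoord.symm (ρ, θ)) := by
          refine setLIntegral_congr_fun measurableSet_Ioo
            (fun θ _ => ?_)
          rw [hGdef, Set.indicator_of_mem (hmem θ), ofReal_norm, enorm_eq_nnnorm]
  have hrad : (∫⁻ ρ in Ioc (0:ℝ) r, ENNReal.ofReal ρ) = ENNReal.ofReal (r ^ 2 / 2) := by
    rw [← ofReal_integral_eq_lintegral_ofReal]
    · congr 1
      rw [← intervalIntegral.integral_of_le hr.le, integral_id]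
      ring
    · exact continuous_id.integrableOn_Ioc
    · filter_upwards [ae_restrict_mem measurableSet_Ioc] with x hx
      exact hx.1.le
  set gball : ℂ → ℝ≥0∞ := (Metric.closedBall (0:ℂ) r).indicator (fun z => G (c + z)) with hgb
  calc ENNReal.ofReal (π * r ^ 2) * ‖f c‖₊
      = ENNReal.ofReal (r ^ 2 / 2) * ENNReal.ofReal (2 * π * ‖f c‖) := by
        rw [← enorm_eq_nnnorm, ← ofReal_norm, ← ENNReal.ofReal_mul (by positivity),
          ← ENNReal.ofReal_mul (by positivity)]
        congr 1
        ring
    _ = ∫⁻ ρ in Ioc (0:ℝ) r, ENNReal.ofReal ρ * ENNReal.ofReal (2 * π * ‖f c‖) := by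
        rw [lintegral_mul_const _ ENNReal.measurable_ofReal, hrad]
    _ ≤ ∫⁻ ρ in Ioc (0:ℝ) r, ENNReal.ofReal ρ *
          ∫⁻ θ in Ioo (-π) π, G (c + Complex.polarCoord.symm (ρ, θ)) := by
        refine lintegral_mono_ae ?_
        filter_upwards [ae_restrict_mem measurableSet_Ioc] with ρ hρ
        exact mul_le_mul_right (key ρ hρ) _
    _ = ∫⁻ p in Ioc (0:ℝ) r ×ˢ Ioo (-π) π,
          ENNReal.ofReal p.1 * G (c + Complex.polarCoord.symm p) := by
        rw [Measure.volume_eq_prod, ← Measure.prod_restrict,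
          lintegral_prod _ hFmeas.aemeasurable]
        refine lintegral_congr fun ρ => ?_
        rw [lintegral_const_mul' _ _ ENNReal.ofReal_ne_top]
    _ = ∫⁻ p in Ioc (0:ℝ) r ×ˢ Ioo (-π) π, ENNReal.ofReal p.1 * gball (Complex.polarCoord.symm p) := by
        refine setLIntegral_congr_fun (measurableSet_Ioc.prod measurableSet_Ioo)
          (fun p hp => ?_)
        have : Complex.polarCoord.symm p ∈ Metric.closedBall (0:ℂ) r := by
          simp only [Metric.mem_closedBall, dist_zero_right,
            Complex.norm_polarCoord_symm]
          rw [abs_of_pos hp.1.1]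
          exact hp.1.2
        rw [hgb, Set.indicator_of_mem this]
    _ ≤ ∫⁻ p in polarCoord.target, ENNReal.ofReal p.1 * gball (Complex.polarCoord.symm p) := by
        apply lintegral_mono_set
        exact Set.prod_mono Ioc_subset_Ioi_self subset_rfl
    _ = ∫⁻ z, gball z := Complex.lintegral_comp_polarCoord_symm' gball
    _ = ∫⁻ z in Metric.closedBall (0:ℂ) r, G (c + z) := by
        rw [hgb, lintegral_indicator measurableSet_closedBall]
    _ = ∫⁻ z in Metric.closedBall c r, G z := by
        rw [← lintegral_indicator measurableSet_closedBall, ← lintegral_indicator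
          measurableSet_closedBall]
        rw [← lintegral_add_left_eq_self (fun z => (Metric.closedBall c r).indicator G z) c]
        refine lintegral_congr fun z => ?_
        by_cases hz : z ∈ Metric.closedBall (0:ℂ) r
        · rw [Set.indicator_of_mem hz, Set.indicator_of_mem]
          simpa [Metric.mem_closedBall, dist_eq_norm] using hz
        · rw [Set.indicator_of_notMem hz, Set.indicator_of_notMem]
          simpa [Metric.mem_closedBall, dist_eq_norm] using hz

/-- If `f` is holomorphic on the strip `S_σ = {z : |Im z| < σ}` with
`M := sup_{|y|<σ} ∫_ℝ |f(x+iy)| dx < ∞`, and `(w_k)` are points of the strip such that the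
closed disks of radius `r` around them are pairwise disjoint and contained in the strip, then
`∑_k |f(w_k)| ≤ 2σM/(πr²)`. -/
theorem summable_on_strip (σ r M : ℝ) (hσ : 0 < σ) (hr : 0 < r) (f : ℂ → ℂ)
    (hf : DifferentiableOn ℂ f {z : ℂ | |z.im| < σ})
    (hint : ∀ y : ℝ, |y| < σ → Integrable fun x : ℝ => f ((x : ℂ) + (y : ℂ) * Complex.I))
    (hM : ∀ y : ℝ, |y| < σ → (∫ x : ℝ, ‖f ((x : ℂ) + (y : ℂ) * Complex.I)‖) ≤ M)
    (w : ℕ → ℂ)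
    (hdisj : Pairwise fun j k =>
      Disjoint (Metric.closedBall (w j) r) (Metric.closedBall (w k) r))
    (hsub : ∀ k, Metric.closedBall (w k) r ⊆ {z : ℂ | |z.im| < σ}) :
    Summable (fun k => ‖f (w k)‖) ∧
      ∑' k, ‖f (w k)‖ ≤ 2 * σ * M / (Real.pi * r ^ 2) := by
  have hM0 : 0 ≤ M :=
    le_trans (integral_nonneg fun x => norm_nonneg _) (hM 0 (by simpa using hσ))
  set S : Set ℂ := {z : ℂ | |z.im| < σ} with hSdef
  have hSopen : IsOpen S :=
    isOpen_lt (continuous_abs.comp Complex.continuous_im) continuous_const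
  set G : ℂ → ℝ≥0∞ := S.indicator (fun z => (‖f z‖₊ : ℝ≥0∞)) with hGdef
  have hGmeas : Measurable G := by
    refine measurable_indicator_of_continuousOn hSopen ?_
    exact ENNReal.continuous_coe.comp_continuousOn (continuous_nnnorm.comp_continuousOn
      hf.continuousOn)
  have hMV : ∀ k, ENNReal.ofReal (π * r ^ 2) * ‖f (w k)‖₊ ≤
      ∫⁻ z in Metric.closedBall (w k) r, G z := by
    intro k
    have := mean_value hSopen hf hr (hsub k)
    rwa [← hGdef] at this
  -- bound over the strip
  have hcomp : Measurable fun p : ℝ × ℝ => G ((p.1 : ℂ) + (p.2 : ℂ) * Complex.I) := by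
    refine hGmeas.comp ?_
    have : Continuous fun p : ℝ × ℝ => (p.1 : ℂ) + (p.2 : ℂ) * Complex.I := by fun_prop
    exact this.measurable
  have hstrip : (∫⁻ z, G z) ≤ ENNReal.ofReal (2 * σ * M) := by
    have e1 : (∫⁻ z, G z) = ∫⁻ p : ℝ × ℝ, G ((p.1 : ℂ) + (p.2 : ℂ) * Complex.I) := by
      rw [← (Complex.volume_preserving_equiv_real_prod.symm).lintegral_comp_emb
        Complex.measurableEquivRealProd.symm.measurableEmbedding G]
      refine lintegral_congr fun p => ?_
      congr 1
      simp [Complex.mk_eq_add_mul_I]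
    rw [e1, Measure.volume_eq_prod, lintegral_prod_symm _ hcomp.aemeasurable]
    have e2 : (∫⁻ y : ℝ, ∫⁻ x : ℝ, G ((x : ℂ) + (y : ℂ) * Complex.I)) ≤
        ∫⁻ y : ℝ, (Ioo (-σ) σ).indicator (fun _ => ENNReal.ofReal M) y := by
      refine lintegral_mono fun y => ?_
      by_cases hy : |y| < σ
      · have hGx : ∀ x : ℝ, G ((x : ℂ) + (y : ℂ) * Complex.I) =
            ENNReal.ofReal ‖f ((x : ℂ) + (y : ℂ) * Complex.I)‖ := by
          intro x
          rw [hGdef, Set.indicator_of_mem, ofReal_norm, enorm_eq_nnnorm]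
          simpa [hSdef] using hy
        calc (∫⁻ x : ℝ, G ((x : ℂ) + (y : ℂ) * Complex.I))
            = ∫⁻ x : ℝ, ENNReal.ofReal ‖f ((x : ℂ) + (y : ℂ) * Complex.I)‖ := by
              exact lintegral_congr fun x => hGx x
          _ = ENNReal.ofReal (∫ x : ℝ, ‖f ((x : ℂ) + (y : ℂ) * Complex.I)‖) :=
              (ofReal_integral_eq_lintegral_ofReal (hint y hy).norm
                (Filter.Eventually.of_forall fun x => norm_nonneg _)).symm
          _ ≤ ENNReal.ofReal M := ENNReal.ofReal_le_ofReal (hM y hy)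
          _ = (Ioo (-σ) σ).indicator (fun _ => ENNReal.ofReal M) y := by
              rw [Set.indicator_of_mem]
              exact mem_Ioo.mpr (abs_lt.mp hy)
      · have hGx : ∀ x : ℝ, G ((x : ℂ) + (y : ℂ) * Complex.I) = 0 := by
          intro x
          rw [hGdef, Set.indicator_of_notMem]
          simpa [hSdef] using hy
        simp only [hGx, lintegral_zero]
        exact zero_le
    refine e2.trans ?_
    rw [lintegral_indicator measurableSet_Ioo, setLIntegral_const, Real.volume_Ioo,
      ← ENNReal.ofReal_mul hM0]
    apply ENNReal.ofReal_le_ofReal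
    nlinarith [hM0, hσ]
  -- combine
  have hchain : ENNReal.ofReal (π * r ^ 2) * ∑' k, (‖f (w k)‖₊ : ℝ≥0∞) ≤
      ENNReal.ofReal (2 * σ * M) := by
    calc ENNReal.ofReal (π * r ^ 2) * ∑' k, (‖f (w k)‖₊ : ℝ≥0∞)
        = ∑' k, ENNReal.ofReal (π * r ^ 2) * (‖f (w k)‖₊ : ℝ≥0∞) := ENNReal.tsum_mul_left.symm
      _ ≤ ∑' k, ∫⁻ z in Metric.closedBall (w k) r, G z := ENNReal.tsum_le_tsum hMV
      _ = ∫⁻ z in ⋃ k, Metric.closedBall (w k) r, G z :=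
          (lintegral_iUnion (fun k => measurableSet_closedBall) hdisj G).symm
      _ ≤ ∫⁻ z, G z :=
          (lintegral_mono_set (Set.subset_univ _)).trans (le_of_eq (setLIntegral_univ G))
      _ ≤ ENNReal.ofReal (2 * σ * M) := hstrip
  have hπ0 : ENNReal.ofReal (π * r ^ 2) ≠ 0 :=
    ne_of_gt (ENNReal.ofReal_pos.mpr (by positivity))
  have hT : (∑' k, (‖f (w k)‖₊ : ℝ≥0∞)) ≤
      ENNReal.ofReal (2 * σ * M) / ENNReal.ofReal (π * r ^ 2) :=
    (ENNReal.le_div_iff_mul_le (Or.inl hπ0) (Or.inr ENNReal.ofReal_ne_top)).mpr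
      (by rw [mul_comm]; exact hchain)
  have hdivlt : ENNReal.ofReal (2 * σ * M) / ENNReal.ofReal (π * r ^ 2) ≠ ⊤ :=
    (ENNReal.div_lt_top ENNReal.ofReal_ne_top hπ0).ne
  have hne : (∑' k, (‖f (w k)‖₊ : ℝ≥0∞)) ≠ ⊤ := ne_top_of_le_ne_top hdivlt hT
  have hsumm : Summable fun k => ‖f (w k)‖₊ := ENNReal.tsum_coe_ne_top_iff_summable.mp hne
  constructor
  · have := NNReal.summable_coe.mpr hsumm
    simpa [coe_nnnorm] using this
  · have htr : (∑' k, (‖f (w k)‖₊ : ℝ≥0∞)).toReal = ∑' k, ‖f (w k)‖ := by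
      rw [ENNReal.tsum_toReal_eq (fun _ => ENNReal.coe_ne_top)]
      simp [coe_nnnorm]
    have hmono := ENNReal.toReal_mono hdivlt hT
    rw [htr, ENNReal.toReal_div,
      ENNReal.toReal_ofReal (mul_nonneg (mul_nonneg (by norm_num) hσ.le) hM0),
      ENNReal.toReal_ofReal (by positivity)] at hmono
    exact hmono
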